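/- Let n ≥ p be non-negative integers and K a field. If N is an n×p matrix over K with rank N < p, then there exists an n×p matrix A such that every matrix in the affine line A + K·N (i.e., A + λN for all λ ∈ K) has rank p. -/

import Mathlib

open Module LinearMap Submodule

theorem stmt1 (K : Type*) [Field K] (n p : ℕ) (hpn : p ≤ n)
    (N : Matrix (Fin n) (Fin p) K) (hN : N.rank < p) :
    ∃ A : Matrix (Fin n) (Fin p) K, ∀ lam : K, (A + lam • N).rank = p := by
  classical
  set f : (Fin p → K) →ₗ[K] (Fin n → K) := N.mulVecLin with hf
  set r : ℕ := N.rank with hrdef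
  have hr : r < p := hN
  have hn0 : 0 < n := by omega
  have hrange : finrank K (LinearMap.range f) = r := rfl
  have hfinp : finrank K (Fin p → K) = p := by simp
  have hfinn : finrank K (Fin n → K) = n := by simp
  have hker : finrank K (LinearMap.ker f) = p - r := by
    have h1 := LinearMap.finrank_range_add_finrank_ker f
    rw [hrange, hfinp] at h1
    omega
  -- complement of the kernel
  obtain ⟨W, hW⟩ := Submodule.exists_isCompl (LinearMap.ker f)
  have hWr : finrank K W = r := by
    have h1 := Submodule.finrank_add_eq_of_isCompl hW
    rw [hker, hfinp] at h1
    omega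
  let bW : Basis (Fin r) K W := Module.finBasisOfFinrankEq K W hWr
  let bK0 : Basis (Fin (p - r)) K (LinearMap.ker f) := Module.finBasisOfFinrankEq K _ hker
  let e2 : (↥W × ↥(LinearMap.ker f)) ≃ₗ[K] (Fin p → K) :=
    Submodule.prodEquivOfIsCompl _ _ hW.symm
  let eidx : (Fin r ⊕ Fin (p - r)) ≃ Fin p := finSumFinEquiv.trans (finCongr (by omega))
  let v : Basis (Fin p) K (Fin p → K) := ((bW.prod bK0).map e2).reindex eidx
  have hv_lt : ∀ (j : Fin p) (hj : (j : ℕ) < r), v j = ((bW ⟨j, hj⟩ : W) : Fin p → K) := by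
    intro j hj
    have he : eidx (Sum.inl ⟨j, hj⟩) = j := by
      apply Fin.ext
      simp [eidx]
    have hsymm : eidx.symm j = Sum.inl ⟨j, hj⟩ := (Equiv.symm_apply_eq _).mpr he.symm
    rw [Basis.reindex_apply, hsymm, Basis.map_apply]
    have hb : (bW.prod bK0) (Sum.inl ⟨j, hj⟩) = (bW ⟨j, hj⟩, 0) :=
      Prod.ext (Basis.prod_apply_inl_fst _ _ _) (Basis.prod_apply_inl_snd _ _ _)
    rw [hb, Submodule.coe_prodEquivOfIsCompl']
    simp
  have hv_ge : ∀ (j : Fin p), r ≤ (j : ℕ) → f (v j) = 0 := by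
    intro j hj
    have hj2 : (j : ℕ) - r < p - r := by omega
    have he : eidx (Sum.inr ⟨(j : ℕ) - r, hj2⟩) = j := by
      apply Fin.ext
      simp [eidx]
      omega
    have hv : v j = ((bK0 ⟨(j : ℕ) - r, hj2⟩ : LinearMap.ker f) : Fin p → K) := by
      have hsymm : eidx.symm j = Sum.inr ⟨(j : ℕ) - r, hj2⟩ := (Equiv.symm_apply_eq _).mpr he.symm
      rw [Basis.reindex_apply, hsymm, Basis.map_apply]
      have hb : (bW.prod bK0) (Sum.inr ⟨(j : ℕ) - r, hj2⟩) = (0, bK0 ⟨(j : ℕ) - r, hj2⟩) :=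
        Prod.ext (Basis.prod_apply_inr_fst _ _ _) (Basis.prod_apply_inr_snd _ _ _)
      rw [hb, Submodule.coe_prodEquivOfIsCompl']
      simp
    rw [hv]
    exact (bK0 ⟨(j : ℕ) - r, hj2⟩).2
  -- image vectors
  have hkerW : LinearMap.ker (f ∘ₗ W.subtype) = ⊥ := by
    rw [LinearMap.ker_eq_bot']
    intro x hx
    have hmem : (x : Fin p → K) ∈ (LinearMap.ker f) ⊓ W := ⟨hx, x.2⟩
    rw [hW.inf_eq_bot] at hmem
    exact Subtype.ext hmem
  have hwli : LinearIndependent K (⇑(f ∘ₗ W.subtype) ∘ ⇑bW) :=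
    bW.linearIndependent.map' (f ∘ₗ W.subtype) hkerW
  set w : Fin r → (Fin n → K) := ⇑(f ∘ₗ W.subtype) ∘ ⇑bW with hwdef
  have hwapp : ∀ i : Fin r, w i = f ((bW i : W) : Fin p → K) := fun i => rfl
  let V : Submodule K (Fin n → K) := span K (Set.range w)
  let bV : Basis (Fin r) K V := Basis.span hwli
  have hVr : finrank K V = r := by
    rw [finrank_span_eq_card hwli, Fintype.card_fin]
  obtain ⟨V', hV'⟩ := Submodule.exists_isCompl V
  have hV'r : finrank K V' = n - r := by
    have h1 := Submodule.finrank_add_eq_of_isCompl hV'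
    rw [hVr, hfinn] at h1
    omega
  let bV' : Basis (Fin (n - r)) K V' := Module.finBasisOfFinrankEq K V' hV'r
  let e3 : (↥V × ↥V') ≃ₗ[K] (Fin n → K) := Submodule.prodEquivOfIsCompl _ _ hV'
  let eidx2 : (Fin r ⊕ Fin (n - r)) ≃ Fin n := finSumFinEquiv.trans (finCongr (by omega))
  let u : Basis (Fin n) K (Fin n → K) := ((bV.prod bV').map e3).reindex eidx2
  have hu_lt : ∀ (s : Fin n) (hs : (s : ℕ) < r), u s = w ⟨s, hs⟩ := by
    intro s hs
    have he : eidx2 (Sum.inl ⟨s, hs⟩) = s := by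
      apply Fin.ext
      simp [eidx2]
    have hsymm : eidx2.symm s = Sum.inl ⟨s, hs⟩ := (Equiv.symm_apply_eq _).mpr he.symm
    rw [Basis.reindex_apply, hsymm, Basis.map_apply]
    have hb : (bV.prod bV') (Sum.inl ⟨s, hs⟩) = (bV ⟨s, hs⟩, 0) :=
      Prod.ext (Basis.prod_apply_inl_fst _ _ _) (Basis.prod_apply_inl_snd _ _ _)
    rw [hb, Submodule.coe_prodEquivOfIsCompl']
    simp only [ZeroMemClass.coe_zero, add_zero]
    exact congrArg Subtype.val (Basis.span_apply hwli ⟨s, hs⟩)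
  -- key : f (v j) = u at index j for j < r
  have hfv : ∀ (j : Fin p) (hj : (j : ℕ) < r), f (v j) = u ⟨j, by omega⟩ := by
    intro j hj
    rw [hv_lt j hj, hu_lt ⟨j, by omega⟩ hj]
    exact (hwapp ⟨j, hj⟩).symm
  -- the shift map
  let shift : Fin p → Fin n := fun j => ⟨((j : ℕ) + 1) % n, Nat.mod_lt _ hn0⟩
  have hshift_val : ∀ j : Fin p, ((j : ℕ) + 1 < n ∧ (shift j : ℕ) = (j : ℕ) + 1) ∨
      ((j : ℕ) + 1 = n ∧ (shift j : ℕ) = 0) := by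
    intro j
    have hj := j.2
    rcases lt_or_eq_of_le (show (j : ℕ) + 1 ≤ n by omega) with h | h
    · left
      exact ⟨h, Nat.mod_eq_of_lt h⟩
    · right
      refine ⟨h, ?_⟩
      simp only [shift, h, Nat.mod_self]
  have hshift_inj : Function.Injective shift := by
    intro a b hab
    have hval : (shift a : ℕ) = (shift b : ℕ) := congrArg Fin.val hab
    apply Fin.ext
    rcases hshift_val a with ⟨h1, h2⟩ | ⟨h1, h2⟩ <;>
      rcases hshift_val b with ⟨h3, h4⟩ | ⟨h3, h4⟩ <;> omega
  -- nilpotent map Ψ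
  let ψ : Fin n → (Fin n → K) := fun s =>
    if hs : 1 ≤ (s : ℕ) ∧ (s : ℕ) ≤ r then u ⟨(s : ℕ) - 1, by omega⟩ else 0
  let Ψ : (Fin n → K) →ₗ[K] (Fin n → K) := u.constr K ψ
  have hΨu : ∀ s : Fin n, Ψ (u s) = ψ s := fun s => Basis.constr_basis u K ψ s
  have hpow : ∀ k : ℕ, ∀ s : Fin n, (s : ℕ) < k → (Ψ ^ k) (u s) = 0 := by
    intro k
    induction k with
    | zero => intro s hs; omega
    | succ k ih =>
      intro s hs
      rw [pow_succ, Module.End.mul_apply, hΨu]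
      simp only [ψ]
      by_cases hc : 1 ≤ (s : ℕ) ∧ (s : ℕ) ≤ r
      · rw [dif_pos hc]
        exact ih ⟨(s : ℕ) - 1, by omega⟩ (by show (s : ℕ) - 1 < k; omega)
      · rw [dif_neg hc, map_zero]
  have hΨnil : IsNilpotent Ψ := by
    refine ⟨n, ?_⟩
    apply Basis.ext u
    intro s
    rw [LinearMap.zero_apply]
    exact hpow n s s.2
  -- the map g
  let g : (Fin p → K) →ₗ[K] (Fin n → K) := v.constr K fun j => u (shift j)
  have hgv : ∀ j : Fin p, g (v j) = u (shift j) := fun j => Basis.constr_basis v K _ j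
  have hli : LinearIndependent K fun j : Fin p => u (shift j) :=
    u.linearIndependent.comp shift hshift_inj
  have hg_inj : Function.Injective g := by
    rw [← LinearMap.ker_eq_bot, eq_bot_iff]
    intro x hx
    have hx0 : g x = 0 := hx
    have hx2 : ∑ j, v.repr x j • u (shift j) = 0 := by
      have h1 : g (∑ j, v.repr x j • v j) = 0 := by rw [v.sum_repr]; exact hx0
      rw [map_sum] at h1
      simpa only [map_smul, hgv] using h1
    have hz := Fintype.linearIndependent_iff.mp hli _ hx2
    have hx3 : x = 0 := by
      rw [← v.sum_repr x]
      exact Finset.sum_eq_zero fun j _ => by rw [hz j, zero_smul]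
    simp [hx3]
  refine ⟨LinearMap.toMatrix' g, fun lam => ?_⟩
  have hmv : (LinearMap.toMatrix' g + lam • N).mulVecLin = g + lam • f := by
    rw [Matrix.mulVecLin_add]
    congr 1
    · exact LinearMap.toMatrix'.symm_apply_apply g
    · apply LinearMap.ext
      intro x
      show (lam • N).mulVec x = lam • (N.mulVec x)
      exact Matrix.smul_mulVec lam N x
  -- Φ = 1 + lam • Ψ is a unit
  have hnil2 : IsNilpotent (lam • Ψ) := by
    obtain ⟨k, hk⟩ := hΨnil
    exact ⟨k, by rw [smul_pow, hk, smul_zero]⟩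
  have hunit : IsUnit (1 + lam • Ψ) := hnil2.isUnit_one_add
  have hΦ_inj : Function.Injective ⇑(1 + lam • Ψ : (Fin n → K) →ₗ[K] (Fin n → K)) := by
    obtain ⟨uu, huu⟩ := hunit
    intro x y hxy
    have h1 : (↑uu⁻¹ * ↑uu : (Fin n → K) →ₗ[K] (Fin n → K)) x =
        (↑uu⁻¹ * ↑uu : (Fin n → K) →ₗ[K] (Fin n → K)) y := by
      rw [Module.End.mul_apply, Module.End.mul_apply, huu, hxy]
    rwa [uu.inv_mul, Module.End.one_apply, Module.End.one_apply] at h1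
  -- the key identity
  have hcomp : g + lam • f = (1 + lam • Ψ) ∘ₗ g := by
    apply Basis.ext v
    intro j
    rw [LinearMap.add_apply, LinearMap.smul_apply, LinearMap.comp_apply, hgv,
      LinearMap.add_apply, LinearMap.smul_apply, Module.End.one_apply, hΨu]
    have hkey : f (v j) = ψ (shift j) := by
      by_cases hj : (j : ℕ) < r
      · rw [hfv j hj]
        have hs : (shift j : ℕ) = (j : ℕ) + 1 := by
          rcases hshift_val j with ⟨h1, h2⟩ | ⟨h1, h2⟩
          · exact h2
          · omega
        have hc : 1 ≤ (shift j : ℕ) ∧ (shift j : ℕ) ≤ r := by omega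
        rw [show ψ (shift j) = u ⟨(shift j : ℕ) - 1, by omega⟩ from dif_pos hc]
        congr 1
        apply Fin.ext
        show (j : ℕ) = (shift j : ℕ) - 1
        omega
      · rw [hv_ge j (le_of_not_gt hj)]
        have hc : ¬(1 ≤ (shift j : ℕ) ∧ (shift j : ℕ) ≤ r) := by
          rcases hshift_val j with ⟨h1, h2⟩ | ⟨h1, h2⟩ <;> omega
        rw [show ψ (shift j) = 0 from dif_neg hc]
    rw [hkey]
  rw [Matrix.rank, hmv, hcomp]
  have hinj : Function.Injective ⇑((1 + lam • Ψ) ∘ₗ g) := by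
    rw [LinearMap.coe_comp]
    exact hΦ_inj.comp hg_inj
  rw [LinearMap.finrank_range_of_inj hinj, hfinp]
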